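/- Let n be odd, u ∈ Z_n^× a unit, and k ∈ Z_n with k ≠ 0, 1 (so f_{u,ku} is a well-defined orbit). Then the set B of all 3-element subsets of Z_n except the orbit f_{u,ku} = {{a, a+u, a+ku} : a ∈ Z_n} satisfies the matroid strong basis exchange axiom if and only if k ∉ {-1, 2, (n+1)/2}. -/

import Mathlib

/-- The translation orbit `f_{i,j} = {{a, a+i, a+j} : a ∈ Z_n}`. -/
def tripleOrbitZ (n : ℕ) (i j : ZMod n) : Set (Finset (ZMod n)) :=
  {s | ∃ a : ZMod n, s = {a, a + i, a + j}}

/-- The (strong) matroid basis exchange axiom. -/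
def ExchangeAxiom {α : Type*} [DecidableEq α] (B : Set (Finset α)) : Prop :=
  ∀ X ∈ B, ∀ Y ∈ B, ∀ x ∈ X, x ∉ Y → ∃ y ∈ Y, y ∉ X ∧ insert y (X.erase x) ∈ B

section Helpers

variable {n : ℕ}

lemma unit_cancel (u : (ZMod n)ˣ) {c d : ZMod n} (h : c * u = d * u) : c = d := by
  have h2 := congrArg (· * ((u⁻¹ : (ZMod n)ˣ) : ZMod n)) h
  simpa [mul_assoc, Units.mul_inv] using h2

lemma unit_ne (u : (ZMod n)ˣ) (h10 : (1 : ZMod n) ≠ 0) : (u : ZMod n) ≠ 0 := by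
  intro h
  apply h10
  rw [← u.mul_inv, h, zero_mul]

lemma diff_inj {R : Type*} [CommRing R] {k s t s' t' : R}
    (h20 : (2:R) ≠ 0) (h10 : (1:R) ≠ 0)
    (hk0 : k ≠ 0) (hk1 : k ≠ 1) (hk2 : k ≠ 2) (hkm1 : k ≠ -1)
    (h2k1 : 2*k ≠ 1) (h2k0 : 2*k ≠ 0) (h2k2 : 2*k ≠ 2)
    (hs : s = 0 ∨ s = 1 ∨ s = k) (ht : t = 0 ∨ t = 1 ∨ t = k)
    (hs' : s' = 0 ∨ s' = 1 ∨ s' = k) (ht' : t' = 0 ∨ t' = 1 ∨ t' = k)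
    (hst : s ≠ t) (hst' : s' ≠ t') (hd : s - t = s' - t') : s = s' := by
  rcases hs with rfl|rfl|rfl <;> rcases ht with rfl|rfl|rfl <;>
  rcases hs' with rfl|rfl|rfl <;> rcases ht' with rfl|rfl|rfl <;>
  first
  | rfl
  | exact absurd rfl hst
  | exact absurd rfl hst'
  | exact absurd (by linear_combination hd) h20
  | exact absurd (by linear_combination -hd) h20
  | exact absurd (by linear_combination hd) h10
  | exact absurd (by linear_combination -hd) h10
  | exact absurd (by linear_combination hd) hk0
  | exact absurd (by linear_combination -hd) hk0
  | exact absurd (by linear_combination hd) hk1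
  | exact absurd (by linear_combination -hd) hk1
  | exact absurd (by linear_combination hd) hk2
  | exact absurd (by linear_combination -hd) hk2
  | exact absurd (by linear_combination hd) hkm1
  | exact absurd (by linear_combination -hd) hkm1
  | exact absurd (by linear_combination hd) h2k1
  | exact absurd (by linear_combination -hd) h2k1
  | exact absurd (by linear_combination hd) h2k0
  | exact absurd (by linear_combination -hd) h2k0
  | exact absurd (by linear_combination hd) h2k2
  | exact absurd (by linear_combination -hd) h2k2

lemma stab (u : (ZMod n)ˣ) {k : ZMod n}
    (h20 : (2:ZMod n) ≠ 0) (h10 : (1:ZMod n) ≠ 0)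
    (hk0 : k ≠ 0) (hk1 : k ≠ 1) (hk2 : k ≠ 2) (hkm1 : k ≠ -1)
    (h2k1 : 2*k ≠ 1) (h2k0 : 2*k ≠ 0) (h2k2 : 2*k ≠ 2)
    {a b p q : ZMod n} (hpq : p ≠ q)
    (hpa : p = a ∨ p = a + ↑u ∨ p = a + k * ↑u)
    (hqa : q = a ∨ q = a + ↑u ∨ q = a + k * ↑u)
    (hpb : p = b ∨ p = b + ↑u ∨ p = b + k * ↑u)
    (hqb : q = b ∨ q = b + ↑u ∨ q = b + k * ↑u) : a = b := by
  have toS : ∀ (z c : ZMod n), (z = c ∨ z = c + ↑u ∨ z = c + k * ↑u) →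
      ∃ s, (s = 0 ∨ s = 1 ∨ s = k) ∧ z = c + s * ↑u := by
    rintro z c (h|h|h)
    · exact ⟨0, Or.inl rfl, by rw [h]; ring⟩
    · exact ⟨1, Or.inr (Or.inl rfl), by rw [h]; ring⟩
    · exact ⟨k, Or.inr (Or.inr rfl), h⟩
  obtain ⟨s, hs, hps⟩ := toS p a hpa
  obtain ⟨t, ht, hqt⟩ := toS q a hqa
  obtain ⟨s', hs', hps'⟩ := toS p b hpb
  obtain ⟨t', ht', hqt'⟩ := toS q b hqb
  have hst : s ≠ t := by rintro rfl; exact hpq (by rw [hps, hqt])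
  have hst' : s' ≠ t' := by rintro rfl; exact hpq (by rw [hps', hqt'])
  have hdu : (s - t) * ↑u = (s' - t') * ↑u := by
    have e1 : (s - t) * (↑u : ZMod n) = p - q := by rw [hps, hqt]; ring
    have e2 : (s' - t') * (↑u : ZMod n) = p - q := by rw [hps', hqt']; ring
    rw [e1, e2]
  have hd := unit_cancel u hdu
  have hss' : s = s' :=
    diff_inj h20 h10 hk0 hk1 hk2 hkm1 h2k1 h2k0 h2k2 hs ht hs' ht' hst hst' hd
  have hfin : a + s * (↑u : ZMod n) = b + s * ↑u := by
    calc a + s * (↑u : ZMod n) = p := hps.symm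
      _ = b + s' * ↑u := hps'
      _ = b + s * ↑u := by rw [hss']
  exact add_right_cancel hfin

lemma exch (u : (ZMod n)ˣ) {k : ZMod n}
    (h20 : (2:ZMod n) ≠ 0) (h10 : (1:ZMod n) ≠ 0)
    (hk0 : k ≠ 0) (hk1 : k ≠ 1) (hk2 : k ≠ 2) (hkm1 : k ≠ -1)
    (h2k1 : 2*k ≠ 1) (h2k0 : 2*k ≠ 0) (h2k2 : 2*k ≠ 2) :
    ExchangeAxiom ({s : Finset (ZMod n) | s.card = 3} \ tripleOrbitZ n (↑u) (k * ↑u)) := by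
  intro X hX Y hY x hxX hxY
  obtain ⟨hX3, hXO⟩ := hX
  obtain ⟨hY3, hYO⟩ := hY
  have hX3' : X.card = 3 := hX3
  have hY3' : Y.card = 3 := hY3
  have hEcard : (X.erase x).card = 2 := by
    rw [Finset.card_erase_of_mem hxX, hX3']
  have hnsub : ¬ Y ⊆ X := by
    intro hsub
    have hYX : Y = X := Finset.eq_of_subset_of_card_le hsub (by rw [hX3', hY3'])
    exact hxY (by rw [hYX]; exact hxX)
  have hne : (Y \ X).Nonempty := Finset.sdiff_nonempty.mpr hnsub
  have h1le : 1 ≤ (Y \ X).card := hne.card_pos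
  rcases eq_or_lt_of_le h1le with h1 | hlt
  · obtain ⟨y, hy⟩ := Finset.card_eq_one.mp h1.symm
    have hymem : y ∈ Y \ X := by rw [hy]; exact Finset.mem_singleton_self y
    have hyY : y ∈ Y := (Finset.mem_sdiff.mp hymem).1
    have hyX : y ∉ X := (Finset.mem_sdiff.mp hymem).2
    refine ⟨y, hyY, hyX, ?_⟩
    have hIcard : (Y ∩ X).card = 2 := by
      have hsum := Finset.card_sdiff_add_card_inter Y X
      rw [← h1, hY3'] at hsum
      omega
    have hXI : Y ∩ X = X.erase x := by
      apply Finset.eq_of_subset_of_card_le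
      · intro z hz
        obtain ⟨hzY, hzX⟩ := Finset.mem_inter.mp hz
        exact Finset.mem_erase.mpr ⟨fun h => hxY (h ▸ hzY), hzX⟩
      · rw [hIcard, hEcard]
    have hins : insert y (X.erase x) = Y := by
      apply Finset.eq_of_subset_of_card_le
      · refine Finset.insert_subset_iff.mpr ⟨hyY, ?_⟩
        rw [← hXI]
        exact Finset.inter_subset_left
      · have hyE : y ∉ X.erase x := fun h => hyX (Finset.mem_of_mem_erase h)
        rw [Finset.card_insert_of_notMem hyE, hEcard, hY3']
    rw [hins]
    exact ⟨hY3, hYO⟩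
  · obtain ⟨y₁, hy₁, y₂, hy₂, hne12⟩ := Finset.one_lt_card.mp hlt
    obtain ⟨hy₁Y, hy₁X⟩ := Finset.mem_sdiff.mp hy₁
    obtain ⟨hy₂Y, hy₂X⟩ := Finset.mem_sdiff.mp hy₂
    have hy₁E : y₁ ∉ X.erase x := fun h => hy₁X (Finset.mem_of_mem_erase h)
    have hy₂E : y₂ ∉ X.erase x := fun h => hy₂X (Finset.mem_of_mem_erase h)
    have hcard1 : (insert y₁ (X.erase x)).card = 3 := by
      rw [Finset.card_insert_of_notMem hy₁E, hEcard]
    have hcard2 : (insert y₂ (X.erase x)).card = 3 := by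
      rw [Finset.card_insert_of_notMem hy₂E, hEcard]
    by_cases hO1 : insert y₁ (X.erase x) ∈ tripleOrbitZ n (↑u) (k * ↑u)
    · by_cases hO2 : insert y₂ (X.erase x) ∈ tripleOrbitZ n (↑u) (k * ↑u)
      · exfalso
        obtain ⟨a, ha⟩ := hO1
        obtain ⟨b, hb⟩ := hO2
        obtain ⟨p, q, hpq, hPQ⟩ := Finset.card_eq_two.mp hEcard
        have hpE : p ∈ X.erase x := by rw [hPQ]; exact Finset.mem_insert_self _ _
        have hqE : q ∈ X.erase x := by
          rw [hPQ]; exact Finset.mem_insert_of_mem (Finset.mem_singleton_self _)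
        have hmem : ∀ z ∈ X.erase x, ∀ (y' c : ZMod n),
            insert y' (X.erase x) = ({c, c + ↑u, c + k * ↑u} : Finset (ZMod n)) →
            z = c ∨ z = c + ↑u ∨ z = c + k * ↑u := by
          intro z hz y' c h
          have hz' : z ∈ ({c, c + (↑u : ZMod n), c + k * ↑u} : Finset (ZMod n)) :=
            h ▸ Finset.mem_insert_of_mem hz
          simpa using hz'
        have hab : a = b := stab u h20 h10 hk0 hk1 hk2 hkm1 h2k1 h2k0 h2k2 hpq
          (hmem p hpE y₁ a ha) (hmem q hqE y₁ a ha) (hmem p hpE y₂ b hb) (hmem q hqE y₂ b hb)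
        have heq12 : insert y₁ (X.erase x) = insert y₂ (X.erase x) := by
          rw [ha, hb, hab]
        have hy₁mem : y₁ ∈ insert y₂ (X.erase x) := heq12 ▸ Finset.mem_insert_self _ _
        rcases Finset.mem_insert.mp hy₁mem with h | h
        · exact hne12 h
        · exact hy₁X (Finset.mem_of_mem_erase h)
      · exact ⟨y₂, hy₂Y, hy₂X, hcard2, hO2⟩
    · exact ⟨y₁, hy₁Y, hy₁X, hcard1, hO1⟩


lemma fail_lemma (h10 : (1:ZMod n) ≠ 0) (h20 : (2:ZMod n) ≠ 0)
    (h30 : (3:ZMod n) ≠ 0) (h40 : (4:ZMod n) ≠ 0)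
    {v : ZMod n} (hv : IsUnit v) :
    ¬ ExchangeAxiom ({s : Finset (ZMod n) | s.card = 3} \ tripleOrbitZ n v (2 * v)) := by
  obtain ⟨vu, rfl⟩ := hv
  set v : ZMod n := (vu : ZMod n) with hvdef
  have key : ∀ c : ZMod n, c ≠ 0 → c * v ≠ 0 := by
    intro c hc h
    exact hc (unit_cancel vu (by rw [zero_mul]; exact h))
  have d10 : v ≠ 0 := fun h => key 1 h10 (by linear_combination h)
  have d20 : 2 * v ≠ 0 := key 2 h20
  have d30 : 3 * v ≠ 0 := key 3 h30
  have d40 : 4 * v ≠ 0 := key 4 h40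
  have d21 : 2 * v ≠ v := fun h => key 1 h10 (by linear_combination h)
  have d31 : 3 * v ≠ v := fun h => key 2 h20 (by linear_combination h)
  have d41 : 4 * v ≠ v := fun h => key 3 h30 (by linear_combination h)
  have d32 : 3 * v ≠ 2 * v := fun h => key 1 h10 (by linear_combination h)
  have d42 : 4 * v ≠ 2 * v := fun h => key 2 h20 (by linear_combination h)
  have d43 : 4 * v ≠ 3 * v := fun h => key 1 h10 (by linear_combination h)
  -- X = {v, 2v, 4v}, Y = {0, v, 3v}, x = 4v
  have hXcard : ({v, 2*v, 4*v} : Finset (ZMod n)).card = 3 :=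
    Finset.card_eq_three.mpr ⟨v, 2*v, 4*v, Ne.symm d21, Ne.symm d41, Ne.symm d42, rfl⟩
  have hYcard : ({0, v, 3*v} : Finset (ZMod n)).card = 3 :=
    Finset.card_eq_three.mpr ⟨0, v, 3*v, Ne.symm d10, Ne.symm d30, Ne.symm d31, rfl⟩
  have hXO : ({v, 2*v, 4*v} : Finset (ZMod n)) ∉ tripleOrbitZ n v (2 * v) := by
    rintro ⟨a, ha⟩
    have h1 : a ∈ ({v, 2*v, 4*v} : Finset (ZMod n)) := by rw [ha]; simp
    have h2 : a + v ∈ ({v, 2*v, 4*v} : Finset (ZMod n)) := by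
      rw [ha]; simp only [Finset.mem_insert, Finset.mem_singleton]; tauto
    have h3 : a + 2*v ∈ ({v, 2*v, 4*v} : Finset (ZMod n)) := by
      rw [ha]; simp only [Finset.mem_insert, Finset.mem_singleton]; tauto
    simp only [Finset.mem_insert, Finset.mem_singleton] at h1 h2 h3
    rcases h1 with rfl|rfl|rfl
    · rcases h3 with h|h|h
      · exact d20 (by linear_combination h)
      · exact d10 (by linear_combination h)
      · exact d10 (by linear_combination -h)
    · rcases h2 with h|h|h
      · exact d20 (by linear_combination h)
      · exact d10 (by linear_combination h)
      · exact d10 (by linear_combination -h)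
    · rcases h2 with h|h|h
      · exact d40 (by linear_combination h)
      · exact d30 (by linear_combination h)
      · exact d10 (by linear_combination h)
  have hYO : ({0, v, 3*v} : Finset (ZMod n)) ∉ tripleOrbitZ n v (2 * v) := by
    rintro ⟨a, ha⟩
    have h1 : a ∈ ({0, v, 3*v} : Finset (ZMod n)) := by rw [ha]; simp
    have h2 : a + v ∈ ({0, v, 3*v} : Finset (ZMod n)) := by
      rw [ha]; simp only [Finset.mem_insert, Finset.mem_singleton]; tauto
    have h3 : a + 2*v ∈ ({0, v, 3*v} : Finset (ZMod n)) := by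
      rw [ha]; simp only [Finset.mem_insert, Finset.mem_singleton]; tauto
    simp only [Finset.mem_insert, Finset.mem_singleton] at h1 h2 h3
    rcases h1 with rfl|rfl|rfl
    · rcases h3 with h|h|h
      · exact d20 (by linear_combination h)
      · exact d10 (by linear_combination h)
      · exact d10 (by linear_combination -h)
    · rcases h2 with h|h|h
      · exact d20 (by linear_combination h)
      · exact d10 (by linear_combination h)
      · exact d10 (by linear_combination -h)
    · rcases h2 with h|h|h
      · exact d40 (by linear_combination h)
      · exact d30 (by linear_combination h)
      · exact d10 (by linear_combination h)
  intro hEx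
  have hxmem : 4*v ∈ ({v, 2*v, 4*v} : Finset (ZMod n)) := by
    simp only [Finset.mem_insert, Finset.mem_singleton]; tauto
  have hxY : 4*v ∉ ({0, v, 3*v} : Finset (ZMod n)) := by
    simp only [Finset.mem_insert, Finset.mem_singleton]
    rintro (h|h|h)
    · exact d40 h
    · exact d30 (by linear_combination h)
    · exact d10 (by linear_combination h)
  obtain ⟨y, hyY, hyX, hins⟩ := hEx {v, 2*v, 4*v} ⟨hXcard, hXO⟩ {0, v, 3*v} ⟨hYcard, hYO⟩
    (4*v) hxmem hxY
  have hXe : ({v, 2*v, 4*v} : Finset (ZMod n)).erase (4*v) = {v, 2*v} := by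
    ext z
    simp only [Finset.mem_erase, Finset.mem_insert, Finset.mem_singleton]
    constructor
    · rintro ⟨hz, rfl|rfl|rfl⟩
      · exact Or.inl rfl
      · exact Or.inr rfl
      · exact absurd rfl hz
    · rintro (rfl|rfl)
      · exact ⟨fun h => d41 h.symm, Or.inl rfl⟩
      · exact ⟨fun h => d42 h.symm, Or.inr (Or.inl rfl)⟩
  rw [hXe] at hins
  simp only [Finset.mem_insert, Finset.mem_singleton] at hyY
  rcases hyY with rfl|rfl|rfl
  · exact hins.2 ⟨0, by norm_num⟩
  · exact hyX (Finset.mem_insert_self _ _)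
  · exact hins.2 ⟨v, by
      have e1 : v + v = 2*v := by ring
      have e2 : v + 2*v = 3*v := by ring
      rw [e1, e2]
      ext z
      simp only [Finset.mem_insert, Finset.mem_singleton]
      tauto⟩

lemma orbit_m1 (u : ZMod n) :
    tripleOrbitZ n u ((-1) * u) = tripleOrbitZ n u (2 * u) := by
  ext s
  simp only [tripleOrbitZ, Set.mem_setOf_eq]
  constructor
  · rintro ⟨a, rfl⟩
    refine ⟨a - u, ?_⟩
    have e1 : a - u + u = a := by ring
    have e2 : a - u + 2*u = a + u := by ring
    have e3 : a + (-1)*u = a - u := by ring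
    rw [e1, e2, e3]
    ext z
    simp only [Finset.mem_insert, Finset.mem_singleton]
    tauto
  · rintro ⟨a, rfl⟩
    refine ⟨a + u, ?_⟩
    have e1 : a + u + u = a + 2*u := by ring
    have e2 : a + u + (-1)*u = a := by ring
    rw [e1, e2]
    ext z
    simp only [Finset.mem_insert, Finset.mem_singleton]
    tauto

lemma orbit_half (u k : ZMod n) (h : 2 * k = 1) :
    tripleOrbitZ n u (k * u) = tripleOrbitZ n (k * u) (2 * (k * u)) := by
  have hu : u = 2 * (k * u) := by linear_combination (-u) * h
  ext s
  simp only [tripleOrbitZ, Set.mem_setOf_eq]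
  constructor
  · rintro ⟨a, rfl⟩
    refine ⟨a, ?_⟩
    rw [← hu]
    ext z
    simp only [Finset.mem_insert, Finset.mem_singleton]
    tauto
  · rintro ⟨a, rfl⟩
    refine ⟨a, ?_⟩
    rw [← hu]
    ext z
    simp only [Finset.mem_insert, Finset.mem_singleton]
    tauto

lemma half_mul (hn : Odd n) :
    (2 : ZMod n) * (((n + 1) / 2 : ℕ) : ZMod n) = 1 := by
  have h2 : 2 ∣ (n + 1) := (hn.add_one).two_dvd
  have hmul : (2 * ((n + 1) / 2) : ℕ) = n + 1 := Nat.mul_div_cancel' h2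
  calc (2 : ZMod n) * (((n + 1) / 2 : ℕ) : ZMod n)
      = ((2 * ((n + 1) / 2) : ℕ) : ZMod n) := by push_cast; ring
    _ = ((n + 1 : ℕ) : ZMod n) := by rw [hmul]
    _ = 1 := by push_cast [ZMod.natCast_self]; ring

lemma S0_not_mem (u : (ZMod n)ˣ) {k : ZMod n}
    (h30 : (3:ZMod n) ≠ 0) (h20 : (2:ZMod n) ≠ 0) (h10 : (1:ZMod n) ≠ 0)
    (hk0 : k ≠ 0) (hk1 : k ≠ 1) (hk2 : k ≠ 2) (hkm1 : k ≠ -1) :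
    ({0, (u : ZMod n), 2 * (u : ZMod n)} : Finset (ZMod n)) ∉ tripleOrbitZ n (↑u) (k * ↑u) := by
  rintro ⟨a, ha⟩
  have h1 : a ∈ ({0, (u : ZMod n), 2 * (u : ZMod n)} : Finset (ZMod n)) := by rw [ha]; simp
  have h2 : a + (u : ZMod n) ∈ ({0, (u : ZMod n), 2 * (u : ZMod n)} : Finset (ZMod n)) := by
    rw [ha]; simp only [Finset.mem_insert, Finset.mem_singleton]; tauto
  have h3 : a + k * (u : ZMod n) ∈ ({0, (u : ZMod n), 2 * (u : ZMod n)} : Finset (ZMod n)) := by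
    rw [ha]; simp only [Finset.mem_insert, Finset.mem_singleton]; tauto
  simp only [Finset.mem_insert, Finset.mem_singleton] at h1 h2 h3
  rcases h1 with rfl|rfl|rfl
  · rcases h3 with h|h|h
    · exact hk0 (unit_cancel u (show k * (u:ZMod n) = 0 * u by linear_combination h))
    · exact hk1 (unit_cancel u (show k * (u:ZMod n) = 1 * u by linear_combination h))
    · exact hk2 (unit_cancel u (show k * (u:ZMod n) = 2 * u by linear_combination h))
  · rcases h3 with h|h|h
    · exact hkm1 (by
        have := unit_cancel u (show (k+1) * (u:ZMod n) = 0 * u by linear_combination h)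
        linear_combination this)
    · exact hk0 (unit_cancel u (show k * (u:ZMod n) = 0 * u by linear_combination h))
    · exact hk1 (unit_cancel u (show k * (u:ZMod n) = 1 * u by linear_combination h))
  · rcases h2 with h|h|h
    · exact h30 (unit_cancel u (show (3:ZMod n) * u = 0 * u by linear_combination h))
    · exact h20 (unit_cancel u (show (2:ZMod n) * u = 0 * u by linear_combination h))
    · exact h10 (unit_cancel u (show (1:ZMod n) * u = 0 * u by linear_combination h))

end Helpers

theorem stmt_19 (n : ℕ) (hn : Odd n) (u : (ZMod n)ˣ) (k : ZMod n)
    (hk0 : k ≠ 0) (hk1 : k ≠ 1) :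
    (({s : Finset (ZMod n) | s.card = 3} \
          tripleOrbitZ n (u : ZMod n) (k * u)).Nonempty ∧
        ExchangeAxiom
          ({s : Finset (ZMod n) | s.card = 3} \ tripleOrbitZ n (u : ZMod n) (k * u))) ↔
      (k ≠ -1 ∧ k ≠ 2 ∧ k ≠ (((n + 1) / 2 : ℕ) : ZMod n)) := by
  rcases Nat.lt_or_ge n 2 with hsmall | h2n
  · have hn1 : n = 1 := by rcases hn with ⟨m, hm⟩; omega
    subst hn1
    exact absurd (Subsingleton.elim k 0) hk0
  by_cases hn3 : n = 3
  · subst hn3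
    have h10 : (1 : ZMod 3) ≠ 0 := by decide
    have hu0 : (u : ZMod 3) ≠ 0 := unit_ne u h10
    have hku0 : k * (u : ZMod 3) ≠ 0 := fun h =>
      hk0 (unit_cancel u (show k * (u:ZMod 3) = 0 * u by linear_combination h))
    have huku : (u : ZMod 3) ≠ k * u := fun h =>
      hk1 (unit_cancel u (show (1:ZMod 3) * u = k * u by linear_combination h)).symm
    apply iff_of_false
    · rintro ⟨⟨s, hs3, hsO⟩, -⟩
      apply hsO
      have hs3' : s.card = 3 := hs3
      have hcard : ({0, (u:ZMod 3), k * u} : Finset (ZMod 3)).card = 3 :=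
        Finset.card_eq_three.mpr ⟨_, _, _, Ne.symm hu0, Ne.symm hku0, huku, rfl⟩
      have huniv : ({0, (u:ZMod 3), k * u} : Finset (ZMod 3)) = Finset.univ :=
        Finset.eq_univ_of_card _ (by rw [hcard, ZMod.card])
      have hsu : s = Finset.univ := Finset.eq_univ_of_card _ (by rw [hs3', ZMod.card])
      refine ⟨0, ?_⟩
      rw [hsu, ← huniv]
      norm_num
    · rintro ⟨h1, -, -⟩
      have hall : ∀ j : ZMod 3, j ≠ 0 → j ≠ 1 → j = -1 := by decide
      exact h1 (hall k hk0 hk1)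
  · have hn5 : 5 ≤ n := by rcases hn with ⟨m, hm⟩; omega
    haveI : NeZero n := ⟨by omega⟩
    have hcast : ∀ c : ℕ, 0 < c → c ≤ 4 → ((c : ℕ) : ZMod n) ≠ 0 := by
      intro c hc hc4 h
      rw [ZMod.natCast_eq_zero_iff] at h
      have := Nat.le_of_dvd hc h
      omega
    have h10 : (1 : ZMod n) ≠ 0 := by
      have := hcast 1 one_pos (by norm_num); simpa using this
    have h20 : (2 : ZMod n) ≠ 0 := by
      have := hcast 2 (by norm_num) (by norm_num); simpa using this
    have h30 : (3 : ZMod n) ≠ 0 := by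
      have := hcast 3 (by norm_num) (by norm_num); simpa using this
    have h40 : (4 : ZMod n) ≠ 0 := by
      have := hcast 4 (by norm_num) (by norm_num); simpa using this
    obtain ⟨w, hw⟩ : ∃ w : ZMod n, w * 2 = 1 := by
      have h2u : IsUnit (2 : ZMod n) := by
        have := (ZMod.isUnit_iff_coprime 2 n).mpr (Nat.coprime_two_left.mpr hn)
        simpa using this
      exact h2u.exists_left_inv
    have cancel2 : ∀ x y : ZMod n, 2*x = 2*y → x = y := by
      intro x y h
      linear_combination w*h + (y-x)*hw
    have hhalf := half_mul hn
    constructor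
    · rintro ⟨-, hex⟩
      refine ⟨?_, ?_, ?_⟩ <;> intro heq
      · rw [heq, orbit_m1] at hex
        exact fail_lemma h10 h20 h30 h40 u.isUnit hex
      · rw [heq] at hex
        exact fail_lemma h10 h20 h30 h40 u.isUnit hex
      · have h2k : 2 * k = 1 := by rw [heq]; exact hhalf
        rw [orbit_half (↑u) k h2k] at hex
        have hkU : IsUnit k := IsUnit.of_mul_eq_one (a := k) 2 (by linear_combination h2k)
        exact fail_lemma h10 h20 h30 h40 (hkU.mul u.isUnit) hex
    · rintro ⟨hkm1, hk2, hkc⟩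
      have h2k1 : 2*k ≠ 1 := fun h => hkc (cancel2 _ _ (by rw [hhalf]; exact h))
      have h2k0 : 2*k ≠ 0 := fun h => hk0 (cancel2 k 0 (by linear_combination h))
      have h2k2 : 2*k ≠ 2 := fun h => hk1 (cancel2 k 1 (by linear_combination h))
      constructor
      · have hu0 : (u : ZMod n) ≠ 0 := unit_ne u h10
        have h2u0 : 2 * (u : ZMod n) ≠ 0 := fun h =>
          h20 (unit_cancel u (show (2:ZMod n) * u = 0 * u by linear_combination h))
        have hu2u : (u : ZMod n) ≠ 2 * (u : ZMod n) := fun h =>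
          h10 (by
            have h12 := unit_cancel u (show (1:ZMod n) * u = 2 * u by linear_combination h)
            linear_combination -h12)
        refine ⟨{0, (u:ZMod n), 2*(u:ZMod n)}, ?_, ?_⟩
        · exact Finset.card_eq_three.mpr ⟨_, _, _, Ne.symm hu0, Ne.symm h2u0, hu2u, rfl⟩
        · exact S0_not_mem u h30 h20 h10 hk0 hk1 hk2 hkm1
      · exact exch u h20 h10 hk0 hk1 hk2 hkm1 h2k1 h2k0 h2k2
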